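/- (Interior C^{1,1} regularity, quantitative form) Let Ω ⊆ ℝ^N be open, φ : Ω → ℝ everywhere differentiable with |∇φ| = 1 in Ω. Let B be an open ball with B̄ ⊆ Ω and let d ∈ (0, dist(B, ∂Ω)/5). Then there is a universal constant C > 0 (independent of φ, Ω, N, B, d) such that |∇φ(x) − ∇φ(y)| ≤ (C/d)|x − y| for all x, y ∈ B with |x − y| < d/10. -/

import Mathlib

open Metric Filter InnerProductSpace
open scoped RealInnerProductSpace Topology

variable {E : Type*} [NormedAddCommGroup E] [InnerProductSpace ℝ E] [CompleteSpace E]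

lemma grad_inner (φ : E → ℝ) (x v : E) : ⟪gradient φ x, v⟫ = fderiv ℝ φ x v :=
  toDual_symm_apply

lemma norm_grad_eq (φ : E → ℝ) (x : E) : ‖gradient φ x‖ = ‖fderiv ℝ φ x‖ :=
  LinearIsometryEquiv.norm_map _ _

lemma grad_neg (φ : E → ℝ) (x : E) : gradient (fun z => -φ z) x = -gradient φ x := by
  unfold gradient
  rw [fderiv_fun_neg, map_neg]

lemma eik_lip {Ω : Set E} (φ : E → ℝ)
    (hdiff : ∀ x ∈ Ω, DifferentiableAt ℝ φ x)
    (heik : ∀ x ∈ Ω, ‖gradient φ x‖ = 1)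
    {s : Set E} (hs : Convex ℝ s) (hsΩ : s ⊆ Ω)
    {a b : E} (ha : a ∈ s) (hb : b ∈ s) : φ b - φ a ≤ ‖b - a‖ := by
  have h := hs.norm_image_sub_le_of_norm_fderiv_le
    (fun z hz => hdiff z (hsΩ hz))
    (fun z hz => by rw [← norm_grad_eq, heik z (hsΩ hz)]) ha hb
  calc φ b - φ a ≤ ‖φ b - φ a‖ := le_abs_self _
    _ ≤ 1 * ‖b - a‖ := h
    _ = ‖b - a‖ := one_mul _

lemma dir_deriv (φ : E → ℝ) {z₀ : E} (w : E) (hz : DifferentiableAt ℝ φ z₀) :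
    Filter.Tendsto (fun t : ℝ => (φ (z₀ + t • w) - φ z₀) / t) (𝓝[>] 0)
      (𝓝 ⟪gradient φ z₀, w⟫) := by
  have hline : HasDerivAt (fun t : ℝ => z₀ + t • w) w 0 := by
    simpa using ((hasDerivAt_id (0:ℝ)).smul_const w).const_add z₀
  have h0 : z₀ + (0:ℝ) • w = z₀ := by simp
  have hF : HasFDerivAt φ (fderiv ℝ φ z₀) (z₀ + (0:ℝ) • w) := by
    rw [h0]; exact hz.hasFDerivAt
  have hf : HasDerivAt (fun t : ℝ => φ (z₀ + t • w)) (fderiv ℝ φ z₀ w) 0 :=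
    hF.comp_hasDerivAt 0 hline
  rw [grad_inner]
  rw [hasDerivAt_iff_tendsto_slope] at hf
  have heq : slope (fun t : ℝ => φ (z₀ + t • w)) 0
      = fun t : ℝ => (φ (z₀ + t • w) - φ z₀) / t := by
    funext t
    rw [slope_def_field]
    simp
  rw [heq] at hf
  exact hf.mono_left (nhdsWithin_mono 0 (fun t ht => ne_of_gt ht))

lemma slope_ge (φ : E → ℝ) {z₀ : E} (hz : DifferentiableAt ℝ φ z₀)
    (hn : ‖gradient φ z₀‖ = 1) {δ : ℝ}
    (h : ∀ᶠ t in 𝓝[>] (0:ℝ), φ (z₀ + t • gradient φ z₀) ≤ φ z₀ + δ * t) : 1 ≤ δ := by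
  have h1 : ⟪gradient φ z₀, gradient φ z₀⟫ = 1 := by
    rw [real_inner_self_eq_norm_sq, hn]; norm_num
  have hten := dir_deriv φ (gradient φ z₀) hz
  rw [h1] at hten
  refine le_of_tendsto hten ?_
  filter_upwards [h, self_mem_nhdsWithin] with t ht ht0
  rw [div_le_iff₀ ht0]
  nlinarith

lemma eik_forward {Ω : Set E} [ProperSpace E] (φ : E → ℝ)
    (hdiff : ∀ x ∈ Ω, DifferentiableAt ℝ φ x)
    (heik : ∀ x ∈ Ω, ‖gradient φ x‖ = 1)
    {x : E} {r : ℝ} (hr : 0 < r) (hball : closedBall x r ⊆ Ω) :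
    φ (x + r • gradient φ x) = φ x + r := by
  have hxΩ : x ∈ Ω := hball (mem_closedBall_self hr.le)
  have hcont : ContinuousOn φ (closedBall x r) :=
    fun z hz => ((hdiff z (hball hz)).continuousAt).continuousWithinAt
  have hconv : Convex ℝ (closedBall x r) := convex_closedBall x r
  have hne : (closedBall x r).Nonempty := ⟨x, mem_closedBall_self hr.le⟩
  obtain ⟨zm, hzm, hmax⟩ := (isCompact_closedBall x r).exists_isMaxOn hne hcont
  have hzmn : ‖zm - x‖ ≤ r := by rwa [← mem_closedBall_iff_norm]
  have hMle : φ zm ≤ φ x + r := by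
    have := eik_lip φ hdiff heik hconv hball (mem_closedBall_self hr.le) hzm
    linarith
  have hMx : φ x ≤ φ zm := hmax (mem_closedBall_self hr.le)
  have hMge : φ x + r ≤ φ zm := by
    by_contra hM
    push_neg at hM
    set δ : ℝ := ((φ zm - φ x) / r + 1) / 2 with hδdef
    have hq0 : 0 ≤ (φ zm - φ x) / r := div_nonneg (by linarith) hr.le
    have hq1 : (φ zm - φ x) / r < 1 := (div_lt_one hr).2 (by linarith)
    have hδ1 : δ < 1 := by rw [hδdef]; linarith
    have hδlow : (φ zm - φ x) / r < δ := by rw [hδdef]; linarith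
    have hδ0 : 0 ≤ δ := by rw [hδdef]; linarith
    set g : E → ℝ := fun z => φ z - δ * ‖z - x‖ with hgdef
    have hgcont : ContinuousOn g (closedBall x r) :=
      hcont.sub ((continuous_norm.comp (continuous_id.sub continuous_const)).continuousOn.const_smul δ)
    obtain ⟨z₀, hz₀, hg⟩ := (isCompact_closedBall x r).exists_isMaxOn hne hgcont
    have hgx : φ x ≤ g z₀ := by
      have := hg (mem_closedBall_self hr.le)
      simpa [hgdef] using this
    have hz₀ball : ‖z₀ - x‖ < r := by
      rcases lt_or_eq_of_le (mem_closedBall_iff_norm.1 hz₀) with h | h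
      · exact h
      · exfalso
        have hgz₀ : g z₀ = φ z₀ - δ * r := by rw [hgdef]; simp [h]
        have : φ z₀ ≤ φ zm := hmax hz₀
        have hδr : φ zm - φ x < δ * r := by
          rw [div_lt_iff₀ hr] at hδlow; linarith
        rw [hgz₀] at hgx
        linarith
    have hz₀Ω : z₀ ∈ Ω := hball hz₀
    set w := gradient φ z₀ with hwdef
    have hw1 : ‖w‖ = 1 := heik z₀ hz₀Ω
    have hev : ∀ᶠ t in 𝓝[>] (0:ℝ), φ (z₀ + t • w) ≤ φ z₀ + δ * t := by
      have hmem : ∀ᶠ t in 𝓝 (0:ℝ), z₀ + t • w ∈ ball x r := by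
        have hc : Continuous (fun t : ℝ => z₀ + t • w) := by continuity
        have : z₀ + (0:ℝ) • w ∈ ball x r := by
          rw [mem_ball_iff_norm]; simpa using hz₀ball
        exact hc.continuousAt.preimage_mem_nhds (isOpen_ball.mem_nhds this)
      filter_upwards [nhdsWithin_le_nhds hmem, self_mem_nhdsWithin] with t hmt ht0
      have hgz : g (z₀ + t • w) ≤ g z₀ := hg (ball_subset_closedBall hmt)
      have htri : ‖z₀ + t • w - x‖ ≤ ‖z₀ - x‖ + t := by
        calc ‖z₀ + t • w - x‖ = ‖(z₀ - x) + t • w‖ := by rw [add_sub_right_comm]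
          _ ≤ ‖z₀ - x‖ + ‖t • w‖ := norm_add_le _ _
          _ = ‖z₀ - x‖ + t := by rw [norm_smul, hw1, Real.norm_eq_abs, abs_of_pos ht0, mul_one]
      simp only [hgdef] at hgz
      nlinarith [hgz, htri]
    have := slope_ge φ (hdiff z₀ hz₀Ω) hw1 hev
    linarith
  have hM : φ zm = φ x + r := le_antisymm hMle hMge
  have hdge : r ≤ ‖zm - x‖ := by
    have := eik_lip φ hdiff heik hconv hball (mem_closedBall_self hr.le) hzm
    linarith
  have hdist : ‖zm - x‖ = r := le_antisymm hzmn hdge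
  set u : E := r⁻¹ • (zm - x) with hudef
  have hu1 : ‖u‖ = 1 := by
    rw [hudef, norm_smul, Real.norm_eq_abs, abs_of_pos (inv_pos.2 hr), hdist]
    field_simp
  have hseg : ∀ s : ℝ, 0 < s → s ≤ r → φ (x + s • u) = φ x + s := by
    intro s hs0 hsr
    have hsu : ‖x + s • u - x‖ = s := by
      rw [add_sub_cancel_left, norm_smul, hu1, Real.norm_eq_abs, abs_of_pos hs0, mul_one]
    have hmem : x + s • u ∈ closedBall x r := by
      rw [mem_closedBall_iff_norm, hsu]; exact hsr
    have hle : φ (x + s • u) - φ x ≤ s := by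
      have := eik_lip φ hdiff heik hconv hball (mem_closedBall_self hr.le) hmem
      rwa [hsu] at this
    have hsu2 : s • u = (s / r) • (zm - x) := by
      rw [hudef, smul_smul, div_eq_mul_inv]
    have hrw : zm - (x + s • u) = (1 - s / r) • (zm - x) := by
      rw [hsu2]; module
    have hge : φ zm - φ (x + s • u) ≤ r - s := by
      have h2 := eik_lip φ hdiff heik hconv hball hmem hzm
      rw [hrw, norm_smul, hdist, Real.norm_eq_abs, abs_of_nonneg (by rw [sub_nonneg]; exact (div_le_one hr).2 hsr : (0:ℝ) ≤ 1 - s/r)] at h2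
      have : (1 - s / r) * r = r - s := by field_simp
      linarith [this ▸ h2]
    linarith [hM ▸ hge]
  have hinner : ⟪gradient φ x, u⟫ = 1 := by
    have hten := dir_deriv φ u (hdiff x hxΩ)
    have hconst : Filter.Tendsto (fun _ : ℝ => (1:ℝ)) (𝓝[>] (0:ℝ)) (𝓝 1) := tendsto_const_nhds
    refine tendsto_nhds_unique (hten.congr' ?_) hconst
    filter_upwards [Ioo_mem_nhdsGT_of_mem (Set.left_mem_Ico.2 hr), self_mem_nhdsWithin] with t ht ht0
    rw [hseg t ht0 ht.2.le, add_sub_cancel_left, div_self (ne_of_gt ht0)]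
  have hup : gradient φ x = u := (inner_eq_one_iff_of_norm_eq_one (heik x hxΩ) hu1).1 hinner
  rw [hup, hudef, smul_smul, mul_inv_cancel₀ hr.ne', one_smul, add_sub_cancel]
  exact hM

lemma eik_lower {Ω : Set E} [ProperSpace E] (φ : E → ℝ)
    (hdiff : ∀ x ∈ Ω, DifferentiableAt ℝ φ x)
    (heik : ∀ x ∈ Ω, ‖gradient φ x‖ = 1)
    {x z : E} {d : ℝ} (hd : 0 < d) (hball : closedBall x d ⊆ Ω)
    (hz : ‖z - x‖ ≤ d / 2) :
    φ x + ⟪gradient φ x, z - x⟫ - ‖z - x‖ ^ 2 / d ≤ φ z := by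
  set p := gradient φ x with hp
  have hp1 : ‖p‖ = 1 := heik x (hball (mem_closedBall_self hd.le))
  have hfwd : φ (x + d • p) = φ x + d := eik_forward φ hdiff heik hd hball
  have ha : |⟪p, z - x⟫| ≤ ‖z - x‖ := by
    have := abs_real_inner_le_norm p (z - x)
    rwa [hp1, one_mul] at this
  have key : ‖z - x - d • p‖ ≤ (d - ⟪p, z - x⟫) + ‖z - x‖ ^ 2 / d := by
    have hrhs : 0 ≤ (d - ⟪p, z - x⟫) + ‖z - x‖ ^ 2 / d := by
      have h1 : ⟪p, z - x⟫ ≤ d / 2 := le_trans (le_of_abs_le ha) hz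
      have h2 : 0 ≤ ‖z - x‖ ^ 2 / d := by positivity
      linarith
    have hexp : ‖z - x - d • p‖ ^ 2 = ‖z - x‖ ^ 2 - 2 * (d * ⟪p, z - x⟫) + d ^ 2 := by
      rw [norm_sub_sq_real, real_inner_smul_right, norm_smul, Real.norm_eq_abs,
        abs_of_pos hd, hp1, real_inner_comm]
      ring
    have hsq : ‖z - x - d • p‖ ^ 2 ≤ ((d - ⟪p, z - x⟫) + ‖z - x‖ ^ 2 / d) ^ 2 := by
      rw [hexp]
      have e1 : ‖z - x‖ ^ 2 / d * d = ‖z - x‖ ^ 2 := div_mul_cancel₀ _ hd.ne'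
      nlinarith [sq_nonneg (⟪p, z - x⟫ - ‖z - x‖ ^ 2 / d), e1]
    calc ‖z - x - d • p‖ = Real.sqrt (‖z - x - d • p‖ ^ 2) :=
          (Real.sqrt_sq (norm_nonneg _)).symm
      _ ≤ Real.sqrt (((d - ⟪p, z - x⟫) + ‖z - x‖ ^ 2 / d) ^ 2) := Real.sqrt_le_sqrt hsq
      _ = (d - ⟪p, z - x⟫) + ‖z - x‖ ^ 2 / d := Real.sqrt_sq hrhs
  have hz_mem : z ∈ closedBall x d := by
    rw [mem_closedBall_iff_norm]; linarith
  have hfp_mem : x + d • p ∈ closedBall x d := by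
    rw [mem_closedBall_iff_norm, add_sub_cancel_left, norm_smul, Real.norm_eq_abs,
      abs_of_pos hd, hp1, mul_one]
  have hlip := eik_lip φ hdiff heik (convex_closedBall x d) hball hz_mem hfp_mem
  have hnrw : ‖x + d • p - z‖ = ‖z - x - d • p‖ := by
    rw [← norm_neg]; congr 1; abel
  rw [hnrw, hfwd] at hlip
  linarith

lemma eik_upper {Ω : Set E} [ProperSpace E] (φ : E → ℝ)
    (hdiff : ∀ x ∈ Ω, DifferentiableAt ℝ φ x)
    (heik : ∀ x ∈ Ω, ‖gradient φ x‖ = 1)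
    {x z : E} {d : ℝ} (hd : 0 < d) (hball : closedBall x d ⊆ Ω)
    (hz : ‖z - x‖ ≤ d / 2) :
    φ z ≤ φ x + ⟪gradient φ x, z - x⟫ + ‖z - x‖ ^ 2 / d := by
  have hneg := eik_lower (fun w => -φ w) (fun w hw => (hdiff w hw).neg)
    (fun w hw => by rw [grad_neg, norm_neg]; exact heik w hw) hd hball hz
  rw [grad_neg, inner_neg_left] at hneg
  linarith


theorem eikonal_interior_C11_quantitative :
    ∃ C : ℝ, 0 < C ∧
      ∀ (N : ℕ) (Ω : Set (EuclideanSpace ℝ (Fin N))), IsOpen Ω →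
      ∀ φ : EuclideanSpace ℝ (Fin N) → ℝ,
        (∀ x ∈ Ω, DifferentiableAt ℝ φ x) →
        (∀ x ∈ Ω, ‖gradient φ x‖ = 1) →
      ∀ (c : EuclideanSpace ℝ (Fin N)) (ρ : ℝ), 0 < ρ →
        closure (ball c ρ) ⊆ Ω →
      ∀ d : ℝ, 0 < d → (∀ p ∈ ball c ρ, 5 * d < infDist p Ωᶜ) →
      ∀ x ∈ ball c ρ, ∀ y ∈ ball c ρ, dist x y < d / 10 →
        ‖gradient φ x - gradient φ y‖ ≤ C / d * ‖x - y‖ := by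
  refine ⟨6, by norm_num, ?_⟩
  intro N Ω hΩ φ hdiff heik c ρ hρ hclos d hd hinf x hx y hy hxy
  have hsub : ∀ a ∈ ball c ρ, closedBall a d ⊆ Ω := by
    intro a ha w hw
    by_contra hwΩ
    have h1 : infDist a Ωᶜ ≤ dist a w := infDist_le_dist_of_mem hwΩ
    have h2 := hinf a ha
    rw [mem_closedBall, dist_comm] at hw
    linarith
  rcases eq_or_ne x y with rfl | hxy'
  · simp
  set p := gradient φ x with hpdef
  set q := gradient φ y with hqdef
  rcases eq_or_ne p q with hpq | hpq
  · rw [hpq, sub_self, norm_zero]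
    positivity
  set s : ℝ := ‖y - x‖ with hsdef
  have hs0 : 0 < s := by
    rw [hsdef, norm_pos_iff, sub_ne_zero]
    exact fun h => hxy' h.symm
  have hsd : s < d / 10 := by
    rw [hsdef, ← norm_sub_rev, ← dist_eq_norm]
    exact hxy
  set v : EuclideanSpace ℝ (Fin N) := ‖p - q‖⁻¹ • (p - q) with hvdef
  have hv1 : ‖v‖ = 1 := by
    rw [hvdef, norm_smul, Real.norm_eq_abs, abs_of_pos (inv_pos.2 (norm_pos_iff.2 (sub_ne_zero.2 hpq)))]
    field_simp [norm_ne_zero_iff.2 (sub_ne_zero.2 hpq)]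
  set z : EuclideanSpace ℝ (Fin N) := y + s • v with hzdef
  have hzy : ‖z - y‖ = s := by
    rw [hzdef, add_sub_cancel_left, norm_smul, Real.norm_eq_abs, abs_of_pos hs0, hv1, mul_one]
  have hzx : ‖z - x‖ ≤ 2 * s := by
    have : z - x = (y - x) + s • v := by rw [hzdef]; abel
    rw [this]
    calc ‖(y - x) + s • v‖ ≤ ‖y - x‖ + ‖s • v‖ := norm_add_le _ _
      _ = s + s := by rw [norm_smul, Real.norm_eq_abs, abs_of_pos hs0, hv1, mul_one, hsdef]
      _ = 2 * s := by ring
  have hzx2 : ‖z - x‖ ≤ d / 2 := le_trans hzx (by linarith)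
  have hzy2 : ‖z - y‖ ≤ d / 2 := by rw [hzy]; linarith
  have hyx2 : ‖y - x‖ ≤ d / 2 := by rw [← hsdef]; linarith
  have hA := eik_lower φ hdiff heik hd (hsub x hx) hzx2
  have hB := eik_upper φ hdiff heik hd (hsub y hy) hzy2
  have hC := eik_upper φ hdiff heik hd (hsub x hx) hyx2
  rw [← hpdef] at hA hC
  rw [← hqdef] at hB
  have hinz : ⟪p, z - x⟫ = ⟪p, y - x⟫ + s * ⟪p, v⟫ := by
    have h1 : z - x = (y - x) + s • v := by rw [hzdef]; abel
    rw [h1, inner_add_right, real_inner_smul_right]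
  have hinq : ⟪q, z - y⟫ = s * ⟪q, v⟫ := by
    rw [hzdef, add_sub_cancel_left, real_inner_smul_right]
  have hpv : ⟪p, v⟫ - ⟪q, v⟫ = ‖p - q‖ := by
    have h1 : ⟪p - q, v⟫ = ‖p - q‖ := by
      rw [hvdef, real_inner_smul_right, real_inner_self_eq_norm_sq]
      have hn : ‖p - q‖ ≠ 0 := norm_ne_zero_iff.2 (sub_ne_zero.2 hpq)
      field_simp
    rw [← h1, inner_sub_left]
  clear_value p q s v z
  have hzxsq : ‖z - x‖ ^ 2 ≤ 4 * s ^ 2 := by nlinarith [norm_nonneg (z - x)]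
  have h1 : s * ⟪p, v⟫ - s * ⟪q, v⟫ ≤ (‖z - x‖ ^ 2 + ‖y - x‖ ^ 2 + ‖z - y‖ ^ 2) / d := by
    have hsplit : (‖z - x‖ ^ 2 + ‖y - x‖ ^ 2 + ‖z - y‖ ^ 2) / d
        = ‖z - x‖ ^ 2 / d + ‖y - x‖ ^ 2 / d + ‖z - y‖ ^ 2 / d := by ring
    rw [hsplit]
    rw [hinz] at hA
    rw [hinq] at hB
    linarith
  have h2 : s * ‖p - q‖ ≤ 6 * s ^ 2 / d := by
    have e1 : s * ‖p - q‖ = s * ⟪p, v⟫ - s * ⟪q, v⟫ := by rw [← hpv]; ring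
    have e2 : (‖z - x‖ ^ 2 + ‖y - x‖ ^ 2 + ‖z - y‖ ^ 2) / d ≤ 6 * s ^ 2 / d := by
      have e4 : ‖y - x‖ = s := hsdef.symm
      have e5 : ‖z - y‖ = s := hzy
      refine (div_le_div_iff_of_pos_right hd).2 ?_
      nlinarith [hzxsq]
    linarith [e1 ▸ h1.trans e2]
  have h3 : ‖p - q‖ ≤ 6 / d * s := by
    have e3 : 6 * s ^ 2 / d = s * (6 / d * s) := by field_simp
    rw [e3] at h2
    exact le_of_mul_le_mul_left h2 hs0
  rw [norm_sub_rev x y, ← hsdef]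
  exact h3
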